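/- Let w* maximize the linear program max Σⱼ c_{P₁…Pₙ} w_{P₁…Pₙ} subject to Σ_{strings with Pᵢ ≠ I} |w| ≤ 1 for each qubit i, and let a = min_i max_{P∈{X,Y,Z}} |c(σ_P on qubit i)|. Then w*_{P₁…Pₙ} = 0 for any Pauli string whose coefficient satisfies |c_{P₁…Pₙ}| < a · |{ i : Pᵢ ≠ I }|. In particular, w* vanishes on all Pauli strings acting nontrivially on more than 2/a qubits. -/

import Mathlib

open scoped BigOperators ComplexOrder
open Matrix

/-- Matrices acting on `n` qubits. -/
abbrev QMat (n : ℕ) := Matrix (Fin n → Fin 2) (Fin n → Fin 2) ℂ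

/-- A density matrix: positive semidefinite with unit trace. -/
def IsState {n : ℕ} (ρ : QMat n) : Prop := ρ.PosSemidef ∧ ρ.trace = 1

/-- The identity and the three Pauli matrices. -/
noncomputable def pauli : Fin 4 → Matrix (Fin 2) (Fin 2) ℂ
  | 0 => 1
  | 1 => !![0, 1; 1, 0]
  | 2 => !![0, -Complex.I; Complex.I, 0]
  | 3 => !![1, 0; 0, -1]

/-- The Pauli string `σ_{P₁} ⊗ ⋯ ⊗ σ_{Pₙ}`. -/
noncomputable def pauliString {n : ℕ} (P : Fin n → Fin 4) : QMat n :=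
  fun a b => ∏ j, pauli (P j) (a j) (b j)

/-- The number of qubits on which the Pauli string `P` acts non-trivially. -/
def pauliWeight {n : ℕ} (P : Fin n → Fin 4) : ℕ :=
  (Finset.univ.filter fun i => P i ≠ 0).card

/-! ### Auxiliary lemmas -/

lemma pauli_conjTranspose (p : Fin 4) : (pauli p)ᴴ = pauli p := by
  fin_cases p <;>
    · ext i j
      fin_cases i <;> fin_cases j <;>
        simp [pauli, Matrix.conjTranspose_apply, Matrix.one_apply]

lemma pauli_mul_self (p : Fin 4) : pauli p * pauli p = 1 := by
  fin_cases p <;>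
    · ext i j
      fin_cases i <;> fin_cases j <;>
        simp [pauli, Matrix.mul_apply, Fin.sum_univ_two, Matrix.one_apply, Complex.ext_iff]

lemma pauliString_isHermitian {n : ℕ} (P : Fin n → Fin 4) :
    (pauliString P).IsHermitian := by
  ext a b
  simp only [Matrix.conjTranspose_apply, pauliString, star_prod]
  refine Finset.prod_congr rfl fun j _ => ?_
  have := congrFun (congrFun (pauli_conjTranspose (P j)) (a j)) (b j)
  simpa [Matrix.conjTranspose_apply] using this

lemma pauliString_mul_self {n : ℕ} (P : Fin n → Fin 4) :
    pauliString P * pauliString P = 1 := by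
  ext a b
  rw [Matrix.mul_apply]
  have step : ∀ k : Fin n → Fin 2,
      pauliString P a k * pauliString P k b
        = ∏ j, (pauli (P j) (a j) (k j) * pauli (P j) (k j) (b j)) := by
    intro k; rw [pauliString, pauliString, ← Finset.prod_mul_distrib]
  rw [Finset.sum_congr rfl (fun k _ => step k)]
  have key := Finset.prod_univ_sum (fun _ : Fin n => (Finset.univ : Finset (Fin 2)))
    (fun j x => pauli (P j) (a j) x * pauli (P j) x (b j))
  rw [← Fintype.piFinset_univ, ← key]
  have hone : ∀ j : Fin n, (∑ x : Fin 2, pauli (P j) (a j) x * pauli (P j) x (b j))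
      = (1 : Matrix (Fin 2) (Fin 2) ℂ) (a j) (b j) := by
    intro j
    have := congrFun (congrFun (pauli_mul_self (P j)) (a j)) (b j)
    rw [Matrix.mul_apply] at this
    exact this
  rw [Finset.prod_congr rfl (fun j _ => hone j)]
  by_cases h : a = b
  · subst h; simp [Matrix.one_apply]
  · have : ∃ j, a j ≠ b j := by
      by_contra hcon
      push_neg at hcon
      exact h (funext hcon)
    obtain ⟨j, hj⟩ := this
    rw [Matrix.one_apply_ne h]
    exact Finset.prod_eq_zero (Finset.mem_univ j) (by simp [Matrix.one_apply, hj])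

lemma trace_nonneg_of_psd {m : Type*} [Fintype m] [DecidableEq m] {A : Matrix m m ℂ}
    (hA : A.PosSemidef) : 0 ≤ A.trace := by
  rw [Matrix.trace]
  apply Finset.sum_nonneg
  intro i _
  exact hA.diag_nonneg

lemma trace_mul_nonneg_of_psd {m : Type*} [Fintype m] [DecidableEq m] {A B : Matrix m m ℂ}
    (hA : A.PosSemidef) (hB : B.PosSemidef) : 0 ≤ (A * B).trace := by
  open scoped MatrixOrder in obtain ⟨C, rfl⟩ := CStarAlgebra.nonneg_iff_eq_star_mul_self.mp hB.nonneg
  rw [← Matrix.mul_assoc, Matrix.trace_mul_cycle]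
  exact trace_nonneg_of_psd (hA.mul_mul_conjTranspose_same C)

lemma re_trace_aux {m : Type*} [Fintype m] [DecidableEq m]
    {τ N : Matrix m m ℂ} (hτ : τ.PosSemidef) (hτ1 : τ.trace = 1)
    (hN : N.IsHermitian) (hN2 : N * N = 1) : 0 ≤ 1 + ((τ * N).trace).re := by
  have hherm : (1 + N)ᴴ = 1 + N := by
    rw [Matrix.conjTranspose_add, Matrix.conjTranspose_one, hN.eq]
  have hsq : (1 + N)ᴴ * (1 + N) = (1 + N) + (1 + N) := by
    rw [hherm, add_mul, one_mul, mul_add, mul_one, hN2]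
    abel
  have h1 : 0 ≤ (τ * ((1 + N)ᴴ * (1 + N))).trace :=
    trace_mul_nonneg_of_psd hτ (Matrix.posSemidef_conjTranspose_mul_self _)
  rw [hsq] at h1
  have h2 := (Complex.le_def.mp h1).1
  rw [mul_add, Matrix.trace_add, mul_add, Matrix.trace_add, mul_one, hτ1] at h2
  simp only [Complex.zero_re, Complex.add_re, Complex.one_re] at h2
  linarith

lemma abs_re_trace_le_one {m : Type*} [Fintype m] [DecidableEq m]
    {τ M : Matrix m m ℂ} (hτ : τ.PosSemidef) (hτ1 : τ.trace = 1)
    (hM : M.IsHermitian) (hM2 : M * M = 1) : |((τ * M).trace).re| ≤ 1 := by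
  have hp := re_trace_aux hτ hτ1 hM hM2
  have hnherm : (-M).IsHermitian := hM.neg
  have hn2 : (-M) * (-M) = 1 := by rw [neg_mul_neg, hM2]
  have hn := re_trace_aux hτ hτ1 hnherm hn2
  rw [Matrix.mul_neg, Matrix.trace_neg, Complex.neg_re] at hn
  rw [abs_le]
  constructor <;> linarith

/-! ### Main theorem -/

/-- If `w` maximizes the linear program `max Σ_P c_P w_P` subject to
`Σ_{P : Pᵢ ≠ I} |w_P| ≤ 1` for each qubit `i`, with coefficients
`c_P = Tr[(ρ−σ)σ_{P₁}⊗⋯⊗σ_{Pₙ}]`, and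
`a = minᵢ max_{Q ∈ {X,Y,Z}} |c(σ_Q on qubit i)| > 0`, then `w_P = 0` whenever
`|c_P| < a · |{i : Pᵢ ≠ I}|`; in particular `w` vanishes on all Pauli strings
acting non-trivially on more than `2/a` qubits. -/
theorem optimal_weights_are_local (n : ℕ) (hn : 0 < n)
    (ρ σ : QMat n) (hρ : IsState ρ) (hσ : IsState σ)
    (c : (Fin n → Fin 4) → ℝ)
    (hc : ∀ P, c P = (((ρ - σ) * pauliString P).trace).re)
    (w : (Fin n → Fin 4) → ℝ)
    (hfeas : ∀ i : Fin n,
      ∑ P ∈ Finset.univ.filter (fun P : Fin n → Fin 4 => P i ≠ 0), |w P| ≤ 1)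
    (hopt : ∀ w' : (Fin n → Fin 4) → ℝ,
      (∀ i : Fin n,
        ∑ P ∈ Finset.univ.filter (fun P : Fin n → Fin 4 => P i ≠ 0), |w' P| ≤ 1) →
      ∑ P, c P * w' P ≤ ∑ P, c P * w P)
    (a : ℝ)
    (ha : a = ⨅ i : Fin n, ⨆ p : Fin 3,
      |c (fun j => if j = i then p.succ else 0)|)
    (hapos : 0 < a) :
    (∀ P : Fin n → Fin 4, |c P| < a * (pauliWeight P : ℝ) → w P = 0) ∧
    (∀ P : Fin n → Fin 4, (2 : ℝ) / a < (pauliWeight P : ℝ) → w P = 0) := by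
  classical
  -- every coefficient is at most 2 in absolute value
  have habs2 : ∀ P : Fin n → Fin 4, |c P| ≤ 2 := by
    intro P
    rw [hc P, sub_mul, Matrix.trace_sub, Complex.sub_re]
    have h1 := abs_re_trace_le_one hρ.1 hρ.2 (pauliString_isHermitian P) (pauliString_mul_self P)
    have h2 := abs_re_trace_le_one hσ.1 hσ.2 (pauliString_isHermitian P) (pauliString_mul_self P)
    rw [abs_le] at h1 h2 ⊢
    constructor <;> linarith [h1.1, h1.2, h2.1, h2.2]
  -- main claim
  have main : ∀ P : Fin n → Fin 4, |c P| < a * (pauliWeight P : ℝ) → w P = 0 := by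
    intro P hlt
    by_contra hw
    set ε := |w P| with hεdef
    have hε : 0 < ε := abs_pos.mpr hw
    set S : Finset (Fin n) := Finset.univ.filter (fun i => P i ≠ 0) with hSdef
    have hwt : (pauliWeight P : ℝ) = (S.card : ℝ) := rfl
    -- choose a good single-qubit Pauli for each qubit
    have hchoice : ∀ i : Fin n, ∃ p : Fin 3,
        a ≤ |c (fun j => if j = i then p.succ else 0)| := by
      intro i
      obtain ⟨p, hp⟩ := exists_eq_ciSup_of_finite
        (f := fun p : Fin 3 => |c (fun j => if j = i then p.succ else 0)|)
      refine ⟨p, ?_⟩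
      rw [hp, ha]
      exact ciInf_le (Set.Finite.bddBelow (Set.finite_range _)) i
    choose p hp using hchoice
    set Q : Fin n → (Fin n → Fin 4) := fun i j => if j = i then (p i).succ else 0 with hQdef
    have hQmem : ∀ i j : Fin n, Q i j ≠ 0 ↔ j = i := by
      intro i j
      by_cases h : j = i <;> simp [hQdef, h, Fin.succ_ne_zero]
    set s : Fin n → ℝ := fun i => if c (Q i) < 0 then -1 else 1 with hsdef
    have hs1 : ∀ i, |s i| = 1 := by
      intro i; by_cases h : c (Q i) < 0 <;> simp [hsdef, h]
    have hsc : ∀ i, c (Q i) * s i = |c (Q i)| := by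
      intro i
      by_cases h : c (Q i) < 0
      · rw [hsdef]; simp only [if_pos h]; rw [abs_of_neg h]; ring
      · rw [hsdef]; simp only [if_neg h]; rw [abs_of_nonneg (not_lt.mp h)]; ring
    -- the perturbed solution
    set w' : (Fin n → Fin 4) → ℝ :=
      fun R => w R - (if R = P then w P else 0) + ∑ i ∈ S, (if R = Q i then s i * ε else 0)
      with hw'def
    -- feasibility of w'
    have hfeas' : ∀ i : Fin n,
        ∑ R ∈ Finset.univ.filter (fun R : Fin n → Fin 4 => R i ≠ 0), |w' R| ≤ 1 := by
      intro i
      set t := Finset.univ.filter (fun R : Fin n → Fin 4 => R i ≠ 0) with htdef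
      have hmem_t : ∀ R : Fin n → Fin 4, R ∈ t ↔ R i ≠ 0 := by
        intro R; simp [htdef]
      have hred : ∀ R ∈ t, (∑ j ∈ S, (if R = Q j then s j * ε else 0))
          = if i ∈ S ∧ R = Q i then s i * ε else 0 := by
        intro R hR
        have hRi : R i ≠ 0 := (hmem_t R).mp hR
        have hz : ∀ j ∈ S, j ≠ i → (if R = Q j then s j * ε else 0) = 0 := by
          intro j _ hji
          rw [if_neg]
          intro hEq
          exact hji ((hQmem j i).mp (hEq ▸ hRi)).symm
        by_cases hiS : i ∈ S
        · rw [Finset.sum_eq_single_of_mem i hiS hz]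
          simp [hiS]
        · rw [if_neg (by tauto)]
          apply Finset.sum_eq_zero
          intro j hj
          have hji : j ≠ i := by rintro rfl; exact hiS hj
          exact hz j hj hji
      by_cases hiS : i ∈ S
      · -- qubit i in the support of P
        have hPi : P i ≠ 0 := by
          have := hiS; rw [hSdef] at this; simpa using this
        have hPt : P ∈ t := (hmem_t P).mpr hPi
        have hQt : Q i ∈ t := (hmem_t _).mpr ((hQmem i i).mpr rfl)
        by_cases hQP : Q i = P
        · -- the single-qubit replacement coincides with P itself
          have hpt : ∀ R ∈ t, |w' R| = |w R| := by
            intro R hR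
            simp only [hw'def]
            rw [hred R hR]
            by_cases hRP : R = P
            · subst hRP
              rw [if_pos rfl, if_pos ⟨hiS, hQP.symm⟩]
              have h1 : w R - w R + s i * ε = s i * ε := by ring
              rw [h1, abs_mul, hs1 i, one_mul, hεdef, abs_abs]
            · rw [if_neg hRP, if_neg (fun h => hRP (h.2.trans hQP))]
              ring_nf
          rw [Finset.sum_congr rfl hpt, htdef]
          exact hfeas i
        · -- P and Q i are distinct strings
          have hQt' : Q i ∈ t.erase P := Finset.mem_erase.mpr ⟨hQP, hQt⟩
          rw [← Finset.add_sum_erase t _ hPt, ← Finset.add_sum_erase _ _ hQt']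
          have e1 : |w' P| = 0 := by
            have h1 : ¬ (i ∈ S ∧ P = Q i) := fun h => hQP h.2.symm
            simp only [hw'def]
            rw [hred P hPt]
            simp [h1]
          have e2 : |w' (Q i)| ≤ |w (Q i)| + ε := by
            simp only [hw'def]
            rw [hred _ hQt, if_neg (fun h : Q i = P => hQP h), if_pos ⟨hiS, rfl⟩]
            calc |w (Q i) - 0 + s i * ε| ≤ |w (Q i) - 0| + |s i * ε| := abs_add_le _ _
              _ = |w (Q i)| + ε := by
                  rw [sub_zero, abs_mul, hs1, one_mul, hεdef, abs_abs]
          have e3 : ∀ R ∈ (t.erase P).erase (Q i), |w' R| = |w R| := by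
            intro R hR
            obtain ⟨hRQ, hRP, hRt⟩ : R ≠ Q i ∧ R ≠ P ∧ R ∈ t := by
              have h1 := Finset.mem_erase.mp hR
              have h2 := Finset.mem_erase.mp h1.2
              exact ⟨h1.1, h2.1, h2.2⟩
            simp only [hw'def]
            rw [hred R hRt, if_neg hRP, if_neg (fun h => hRQ h.2)]
            ring_nf
          rw [Finset.sum_congr rfl e3, e1]
          have horig := hfeas i
          rw [← htdef, ← Finset.add_sum_erase t _ hPt, ← Finset.add_sum_erase _ _ hQt'] at horig
          linarith [e2, horig, hεdef]
      · -- qubit i outside the support of P : nothing changes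
        have hpt : ∀ R ∈ t, |w' R| = |w R| := by
          intro R hR
          have hRi : R i ≠ 0 := (hmem_t R).mp hR
          have hRP : R ≠ P := by
            rintro rfl
            exact hiS (by simp [hSdef, hRi])
          simp only [hw'def]
          rw [hred R hR, if_neg hRP, if_neg (show ¬ (i ∈ S ∧ R = Q i) by tauto)]
          simp
        rw [Finset.sum_congr rfl hpt, htdef]
        exact hfeas i
    -- the objective strictly increases : contradiction
    have hobj := hopt w' hfeas'
    have hexp : (∑ R, c R * w' R)
        = (∑ R, c R * w R) - c P * w P + ∑ i ∈ S, c (Q i) * (s i * ε) := by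
      simp only [hw'def]
      have hsplit : ∀ R : Fin n → Fin 4,
          c R * (w R - (if R = P then w P else 0) + ∑ i ∈ S, (if R = Q i then s i * ε else 0))
            = c R * w R - (if R = P then c R * w P else 0)
              + ∑ i ∈ S, (if R = Q i then c R * (s i * ε) else 0) := by
        intro R
        rw [mul_add, mul_sub, Finset.mul_sum]
        congr 1
        · congr 1
          split <;> simp
        · refine Finset.sum_congr rfl fun j _ => ?_
          split <;> simp
      rw [Finset.sum_congr rfl (fun R _ => hsplit R), Finset.sum_add_distrib,
        Finset.sum_sub_distrib]
      congr 1
      · congr 1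
        rw [Fintype.sum_ite_eq' P (fun R => c R * w P)]
      · rw [Finset.sum_comm]
        refine Finset.sum_congr rfl fun j _ => ?_
        rw [Fintype.sum_ite_eq' (Q j) (fun R => c R * (s j * ε))]
    have hlow : a * (S.card : ℝ) * ε ≤ ∑ i ∈ S, c (Q i) * (s i * ε) := by
      have hterm : ∀ i ∈ S, a * ε ≤ c (Q i) * (s i * ε) := by
        intro i _
        rw [← mul_assoc, hsc i]
        exact mul_le_mul_of_nonneg_right (hp i) (le_of_lt hε)
      calc a * (S.card : ℝ) * ε = ∑ _i ∈ S, a * ε := by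
            rw [Finset.sum_const, nsmul_eq_mul]; ring
        _ ≤ _ := Finset.sum_le_sum hterm
    have hcw : c P * w P ≤ |c P| * ε := by
      calc c P * w P ≤ |c P * w P| := le_abs_self _
        _ = |c P| * ε := by rw [abs_mul, hεdef]
    have hgain : (∑ R, c R * w R) < ∑ R, c R * w' R := by
      rw [hexp]
      have h1 : |c P| * ε < a * (S.card : ℝ) * ε := by
        apply mul_lt_mul_of_pos_right _ hε
        rw [← hwt]; exact hlt
      linarith
    linarith [hobj, hgain]
  refine ⟨main, fun P hP => main P ?_⟩
  have h2 : (2 : ℝ) < a * (pauliWeight P : ℝ) := by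
    rw [div_lt_iff₀ hapos] at hP
    nlinarith
  exact lt_of_le_of_lt (habs2 P) h2
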